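/- Let θ ∈ [1/2, 1) and C₂ > 0, and suppose that μ and E satisfy the super log-Sobolev inequality with rate function β_SL(s) = C₂(1 + s^{−θ/(1−θ)}), s > 0. Then there exists a constant C₁ > 0 such that μ and E satisfy the super-Poincaré inequality with rate function β_SP(s) = exp(C₁(1 + s^{−θ})), s > 0; that is, μ(f²) ≤ s·E(f) + exp(C₁(1 + s^{−θ}))·μ(|f|)² for every s > 0 and every f ∈ D. -/

import Mathlib

open MeasureTheory Real Set

/-- Entropy of a nonnegative function `g` with respect to `μ`:
`Ent_μ(g) = μ(g log g) - μ(g) log μ(g)` (with the convention `0 · log 0 = 0`). -/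
noncomputable def Ent {Ω : Type*} [MeasurableSpace Ω] (μ : Measure Ω) (g : Ω → ℝ) : ℝ :=
  (∫ x, g x * Real.log (g x) ∂μ) - (∫ x, g x ∂μ) * Real.log (∫ x, g x ∂μ)

/-- Truncation `f_n := min((|f| - δ^{n/2})₊, δ^{(n+1)/2} - δ^{n/2})`. -/
noncomputable def trunc {Ω : Type*} (f : Ω → ℝ) (δ : ℝ) (n : ℕ) : Ω → ℝ :=
  fun x => min (max (|f x| - δ ^ ((n : ℝ) / 2)) 0) (δ ^ (((n : ℝ) + 1) / 2) - δ ^ ((n : ℝ) / 2))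

/-- The `μ`-essential supremum of `|f|`. -/
noncomputable def essNorm {Ω : Type*} [MeasurableSpace Ω] (μ : Measure Ω) (f : Ω → ℝ) : ℝ :=
  (eLpNorm f ⊤ μ).toReal

/-- `ξ₁(t) := inf { r / (1 - t β(r)) : r > 0, 1 - t β(r) > 0 }`. -/
noncomputable def xi1 (β : ℝ → ℝ) (t : ℝ) : ℝ :=
  sInf {y | ∃ r, 0 < r ∧ 0 < 1 - t * β r ∧ y = r / (1 - t * β r)}

/-- `ξ₂(t) := inf { r / (t - β(r)) : r > 0, t - β(r) > 0 }`. -/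
noncomputable def xi2 (β : ℝ → ℝ) (t : ℝ) : ℝ :=
  sInf {y | ∃ r, 0 < r ∧ 0 < t - β r ∧ y = r / (t - β r)}

lemma key_pointwise (c t : ℝ) (hc : 0 < c) (ht : 0 ≤ t) :
    2 * ((Real.log c + 1) * t ^ 2 - c * t) ≤ t ^ 2 * Real.log (t ^ 2) := by
  rcases ht.eq_or_lt with h | h
  · simp [← h]
  · have hlog := Real.log_le_sub_one_of_pos (div_pos hc h)
    rw [Real.log_div hc.ne' h.ne'] at hlog
    have h2 : Real.log (t ^ 2) = 2 * Real.log t := by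
      rw [Real.log_pow]; push_cast; ring
    rw [h2]
    have h3 : t ^ 2 * (c / t - 1) = c * t - t ^ 2 := by field_simp
    nlinarith [mul_le_mul_of_nonneg_left hlog (sq_nonneg t)]

lemma integrable_of_bdd {Ω : Type*} [MeasurableSpace Ω] (μ : Measure Ω)
    [IsProbabilityMeasure μ] (g : Ω → ℝ) (hg : Measurable g) (M : ℝ)
    (h : ∀ x, |g x| ≤ M) : Integrable g μ :=
  (integrable_const M).mono' hg.aestronglyMeasurable
    (ae_of_all _ (by simpa [Real.norm_eq_abs] using h))

/-- Example 1.4 (2), first part: SLSI with rate `C₂(1 + s^{-θ/(1-θ)})`, `θ ∈ [1/2, 1)`,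
implies SPI with rate `exp(C₁(1 + s^{-θ}))`. -/
theorem example_slsi_to_spi {Ω : Type*} [MeasurableSpace Ω] (μ : Measure Ω) [IsProbabilityMeasure μ]
    (D : Set (Ω → ℝ)) (E : (Ω → ℝ) → ℝ)
    (hD : ∀ f ∈ D, Measurable f ∧ ∃ M : ℝ, ∀ x, |f x| ≤ M)
    (hE : ∀ f, 0 ≤ E f)
    (htrunc : ∀ f ∈ D, ∀ δ : ℝ, 2 < δ →
      (∀ n : ℕ, trunc f δ n ∈ D) ∧ ∑' n : ℕ, E (trunc f δ n) ≤ E f)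
    (θ C₂ : ℝ) (hθ₁ : 1 / 2 ≤ θ) (hθ₂ : θ < 1) (hC₂ : 0 < C₂)
    (hSLSI : ∀ s : ℝ, 0 < s → ∀ f ∈ D,
      Ent μ (fun x => f x ^ 2) ≤
        s * E f + C₂ * (1 + s ^ (-(θ / (1 - θ)))) * (∫ x, f x ^ 2 ∂μ)) :
    ∃ C₁ > (0 : ℝ), ∀ s : ℝ, 0 < s → ∀ f ∈ D,
      (∫ x, f x ^ 2 ∂μ) ≤ s * E f + Real.exp (C₁ * (1 + s ^ (-θ))) * (∫ x, |f x| ∂μ) ^ 2 := by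
  refine ⟨2 + 2 * C₂, by linarith, ?_⟩
  intro s hs f hf
  obtain ⟨hfm, M, hM⟩ := hD f hf
  have hM' : ∀ x, |f x| ≤ max M 0 := fun x => le_trans (hM x) (le_max_left _ _)
  have hsq : ∀ x, f x ^ 2 ≤ (max M 0) ^ 2 := fun x => by
    have := hM' x
    nlinarith [abs_nonneg (f x), sq_abs (f x)]
  have hint1 : Integrable (fun x => f x ^ 2) μ := by
    refine integrable_of_bdd μ _ (hfm.pow_const 2) ((max M 0) ^ 2) (fun x => ?_)
    rw [abs_of_nonneg (sq_nonneg _)]; exact hsq x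
  have hint2 : Integrable (fun x => |f x|) μ := by
    refine integrable_of_bdd μ _ hfm.abs (max M 0) (fun x => ?_)
    rw [abs_abs]; exact hM' x
  have hint3 : Integrable (fun x => f x ^ 2 * Real.log (f x ^ 2)) μ := by
    obtain ⟨C, hC⟩ := (isCompact_Icc (a := (0:ℝ)) (b := (max M 0) ^ 2)).exists_bound_of_continuousOn
      Real.continuous_mul_log.continuousOn
    refine integrable_of_bdd μ _ ((hfm.pow_const 2).mul ((hfm.pow_const 2).log)) C (fun x => ?_)
    have := hC (f x ^ 2) ⟨sq_nonneg _, hsq x⟩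
    simpa only [Real.norm_eq_abs] using this
  set A := ∫ x, f x ^ 2 ∂μ with hAdef
  set B := ∫ x, |f x| ∂μ with hBdef
  have hA0 : 0 ≤ A := integral_nonneg fun x => sq_nonneg _
  have hB0 : 0 ≤ B := integral_nonneg fun x => abs_nonneg _
  by_cases hB : B = 0
  · have hf0 : (fun x => |f x|) =ᵐ[μ] 0 :=
      (integral_eq_zero_iff_of_nonneg (fun x => abs_nonneg _) hint2).mp hB
    have hA : A = 0 := by
      have h2 : (fun x => f x ^ 2) =ᵐ[μ] 0 := by
        filter_upwards [hf0] with x hx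
        have : f x = 0 := abs_eq_zero.mp hx
        simp [this]
      rw [hAdef, integral_congr_ae h2]; simp
    rw [hA, hB]
    have := mul_nonneg hs.le (hE f)
    nlinarith
  · have hBpos : 0 < B := hB0.lt_of_ne' hB
    by_cases hcase : A ≤ Real.exp ((2 + 2 * C₂) * (1 + s ^ (-θ))) * B ^ 2
    · have := mul_nonneg hs.le (hE f); linarith
    · push_neg at hcase
      have hApos : 0 < A := lt_trans (by positivity) hcase
      have hL : (2 + 2 * C₂) * (1 + s ^ (-θ)) < Real.log A - 2 * Real.log B := by
        have h1 := Real.log_lt_log (by positivity) hcase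
        rw [Real.log_mul (Real.exp_ne_zero _) (by positivity), Real.log_exp,
          Real.log_pow] at h1
        push_cast at h1; linarith
      set L := Real.log A - 2 * Real.log B with hLdef
      -- entropy lower bound
      have hc : 0 < A / B := div_pos hApos hBpos
      have hlow : ∀ x, 2 * ((Real.log (A / B) + 1) * f x ^ 2 - (A / B) * |f x|) ≤
          f x ^ 2 * Real.log (f x ^ 2) := fun x => by
        have := key_pointwise (A / B) |f x| hc (abs_nonneg _)
        simpa [sq_abs] using this
      have hint_lhs : Integrable
          (fun x => 2 * ((Real.log (A / B) + 1) * f x ^ 2 - (A / B) * |f x|)) μ :=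
        (((hint1.const_mul _).sub (hint2.const_mul _)).const_mul 2)
      have hmono := integral_mono hint_lhs hint3 hlow
      have hcalc : ∫ x, 2 * ((Real.log (A / B) + 1) * f x ^ 2 - (A / B) * |f x|) ∂μ
          = 2 * ((Real.log (A / B) + 1) * A - (A / B) * B) := by
        rw [integral_const_mul, integral_sub (hint1.const_mul _) (hint2.const_mul _),
          integral_const_mul, integral_const_mul]
      rw [hcalc, Real.log_div hApos.ne' hB, div_mul_cancel₀ _ hB] at hmono
      have hEnt_eq : Ent μ (fun x => f x ^ 2)
          = (∫ x, f x ^ 2 * Real.log (f x ^ 2) ∂μ) - A * Real.log A := rfl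
      have hEnt_low : A * L ≤ Ent μ (fun x => f x ^ 2) := by
        rw [hEnt_eq, hLdef]; nlinarith [hmono]
      -- apply SLSI at r = s ^ (1 - θ)
      have hSL := hSLSI (s ^ (1 - θ)) (Real.rpow_pos_of_pos hs _) f hf
      have hr : ((s : ℝ) ^ ((1:ℝ) - θ)) ^ (-(θ / (1 - θ))) = s ^ (-θ) := by
        rw [← Real.rpow_mul hs.le]
        congr 1
        have hne : (1:ℝ) - θ ≠ 0 := by linarith
        field_simp
      rw [hr] at hSL
      have hsθ : 0 < s ^ (-θ) := Real.rpow_pos_of_pos hs _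
      have key1 : A * L ≤ s ^ ((1:ℝ) - θ) * E f + C₂ * (1 + s ^ (-θ)) * A :=
        le_trans hEnt_low hSL
      have h2 : s ^ (-θ) * A ≤ s ^ ((1:ℝ) - θ) * E f := by
        nlinarith [mul_lt_mul_of_pos_left hL hApos, hsθ, hApos, hC₂,
          mul_pos hsθ hApos]
      have hθpos : (0:ℝ) < s ^ θ := Real.rpow_pos_of_pos hs _
      have h3 : A ≤ s * E f := by
        have h4 := mul_le_mul_of_nonneg_left h2 hθpos.le
        have e1 : s ^ θ * s ^ (-θ) = 1 := by
          rw [← Real.rpow_add hs]; simp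
        have e2 : s ^ θ * s ^ ((1:ℝ) - θ) = s := by
          rw [← Real.rpow_add hs]
          norm_num
        calc A = s ^ θ * s ^ (-θ) * A := by rw [e1]; ring
          _ ≤ s ^ θ * s ^ ((1:ℝ) - θ) * E f := by rw [mul_assoc, mul_assoc]; exact h4
          _ = s * E f := by rw [e2]
      have hpos : 0 ≤ Real.exp ((2 + 2 * C₂) * (1 + s ^ (-θ))) * B ^ 2 := by positivity
      linarith
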